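/- Define the Kelvin inversion (𝒦f)(x) = (x̄/|x|⁸) f(x̄/|x|²) for octonion-valued f. Then the Szegő kernel satisfies S(x,a) = 𝒦(E(·, ā))(x), where E(x,a) = (x̄ - ā)/|x - a|⁸ and S(x,a) = (1 - x̄a)/|1 - x̄a|⁸, for all x ≠ 0 with x̄/|x|² ≠ ā. -/

import Mathlib

noncomputable section
open MeasureTheory Metric
open scoped Quaternion

/-- The octonions, via the Cayley–Dickson construction on the quaternions,
carrying the Euclidean (`L²`) norm. -/
abbrev Octonion : Type := WithLp 2 (ℍ[ℝ] × ℍ[ℝ])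

namespace Octonion

def mk (a b : ℍ[ℝ]) : Octonion := (WithLp.equiv 2 (ℍ[ℝ] × ℍ[ℝ])).symm (a, b)
def p1 (x : Octonion) : ℍ[ℝ] := (WithLp.equiv 2 (ℍ[ℝ] × ℍ[ℝ]) x).1
def p2 (x : Octonion) : ℍ[ℝ] := (WithLp.equiv 2 (ℍ[ℝ] × ℍ[ℝ]) x).2

instance : One Octonion := ⟨mk 1 0⟩
/-- Cayley–Dickson multiplication: `(a,b)(c,d) = (ac - d̄b, da + bc̄)`. -/
instance : Mul Octonion :=
  ⟨fun x y => mk (p1 x * p1 y - star (p2 y) * p2 x) (p2 y * p1 x + p2 x * star (p1 y))⟩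

/-- Octonionic conjugation. -/
def conj (x : Octonion) : Octonion := mk (star (p1 x)) (-(p2 x))

/-- The standard basis `e₀ = 1, e₁, …, e₇` of the octonions. -/
def e : Fin 8 → Octonion
  | 0 => mk 1 0
  | 1 => mk ⟨0,1,0,0⟩ 0
  | 2 => mk ⟨0,0,1,0⟩ 0
  | 3 => mk ⟨0,0,0,1⟩ 0
  | 4 => mk 0 1
  | 5 => mk 0 ⟨0,1,0,0⟩
  | 6 => mk 0 ⟨0,0,1,0⟩
  | 7 => mk 0 ⟨0,0,0,1⟩

/-- The real coordinates of an octonion w.r.t. the basis `e`. -/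
def coord (i : Fin 8) (x : Octonion) : ℝ :=
  match i with
  | 0 => (p1 x).re | 1 => (p1 x).imI | 2 => (p1 x).imJ | 3 => (p1 x).imK
  | 4 => (p2 x).re | 5 => (p2 x).imI | 6 => (p2 x).imJ | 7 => (p2 x).imK

/-- Partial derivative in the direction `e i`. -/
def pd (i : Fin 8) (f : Octonion → Octonion) (x : Octonion) : Octonion :=
  fderiv ℝ f x (e i)

/-- The generalized Cauchy–Riemann operator `Df = ∑ eᵢ ∂f/∂xᵢ`. -/
def D (f : Octonion → Octonion) (x : Octonion) : Octonion := ∑ i, e i * pd i f x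

/-- The right-acting Cauchy–Riemann operator `fD = ∑ (∂f/∂xᵢ) eᵢ`. -/
def Dright (f : Octonion → Octonion) (x : Octonion) : Octonion := ∑ i, pd i f x * e i

/-- The conjugate Cauchy–Riemann operator `D̄f = ∑ ēᵢ ∂f/∂xᵢ`. -/
def Dbar (f : Octonion → Octonion) (x : Octonion) : Octonion := ∑ i, conj (e i) * pd i f x

/-- The Laplacian `Δf = ∑ ∂²f/∂xᵢ²`. -/
def lap (f : Octonion → Octonion) (x : Octonion) : Octonion :=
  ∑ i, fderiv ℝ (fun y => fderiv ℝ f y (e i)) x (e i)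

instance : MeasurableSpace Octonion := borel _
instance : BorelSpace Octonion := ⟨rfl⟩
instance : MeasureSpace Octonion := ⟨Measure.addHaar⟩

/-- The surface measure on the unit sphere `S⁷`. -/
def sphereMeasure : Measure (sphere (0 : Octonion) 1) := (volume : Measure Octonion).toSphere

/-- `ω₈`, the surface area of the unit sphere in `ℝ⁸`. -/
def ω : ℝ := (sphereMeasure Set.univ).toReal

@[simp] lemma mk_fst (a b : ℍ[ℝ]) : (mk a b).fst = a := rfl
@[simp] lemma mk_snd (a b : ℍ[ℝ]) : (mk a b).snd = b := rfl
@[simp] lemma one_fst : (1 : Octonion).fst = 1 := rfl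
@[simp] lemma one_snd : (1 : Octonion).snd = 0 := rfl
lemma p1_mk (a b : ℍ[ℝ]) : p1 (mk a b) = a := rfl
lemma p2_mk (a b : ℍ[ℝ]) : p2 (mk a b) = b := rfl
lemma ext' {x y : Octonion} (h1 : p1 x = p1 y) (h2 : p2 x = p2 y) : x = y :=
  (WithLp.equiv 2 (ℍ[ℝ] × ℍ[ℝ])).injective (Prod.ext h1 h2)
lemma mul_def (x y : Octonion) :
    x * y = mk (p1 x * p1 y - star (p2 y) * p2 x) (p2 y * p1 x + p2 x * star (p1 y)) := rfl
lemma p1_smul (r : ℝ) (x : Octonion) : p1 (r • x) = r • p1 x := rfl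
lemma p2_smul (r : ℝ) (x : Octonion) : p2 (r • x) = r • p2 x := rfl
lemma p1_sub (x y : Octonion) : p1 (x - y) = p1 x - p1 y := rfl
lemma p2_sub (x y : Octonion) : p2 (x - y) = p2 x - p2 y := rfl
lemma p1_one : p1 (1 : Octonion) = 1 := rfl
lemma p2_one : p2 (1 : Octonion) = 0 := rfl
lemma conj_conj (x : Octonion) : conj (conj x) = x := by
  apply ext' <;> simp [conj, p1_mk, p2_mk]
lemma conj_smul (r : ℝ) (x : Octonion) : conj (r • x) = r • conj x := by
  apply ext'
  · simp [conj, p1_mk, p1_smul, star_smul]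
  · simp [conj, p2_mk, p2_smul]

lemma conj_sub (x y : Octonion) : conj (x - y) = conj x - conj y := by
  apply ext'
  · simp [conj, p1_mk, p1_sub]
  · simp [conj, p2_mk, p2_sub]; abel
lemma norm_sq (x : Octonion) :
    ‖x‖ ^ 2 = Quaternion.normSq (p1 x) + Quaternion.normSq (p2 x) := by
  rw [WithLp.prod_norm_sq_eq_of_L2, Quaternion.normSq_eq_norm_mul_self,
    Quaternion.normSq_eq_norm_mul_self, sq, sq]
  rfl
lemma norm_conj (x : Octonion) : ‖conj x‖ = ‖x‖ := by
  have h : ‖conj x‖ ^ 2 = ‖x‖ ^ 2 := by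
    simp [norm_sq, conj, p1_mk, p2_mk]
  nlinarith [norm_nonneg (conj x), norm_nonneg x]
lemma smul_mul (r : ℝ) (x y : Octonion) : (r • x) * y = r • (x * y) := by
  apply ext' <;>
  · show _ = r • _
    rw [mul_def, mul_def]
    ext <;>
      simp [p1_mk, p2_mk, p1_smul, p2_smul, Quaternion.re_mul, Quaternion.imI_mul,
        Quaternion.imJ_mul, Quaternion.imK_mul] <;> ring
lemma mul_smul' (r : ℝ) (x y : Octonion) : x * (r • y) = r • (x * y) := by
  apply ext' <;>
  · show _ = r • _
    rw [mul_def, mul_def]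
    ext <;>
      simp [p1_mk, p2_mk, p1_smul, p2_smul, Quaternion.re_mul, Quaternion.imI_mul,
        Quaternion.imJ_mul, Quaternion.imK_mul] <;> ring
lemma mul_sub' (x y z : Octonion) : x * (y - z) = x * y - x * z := by
  apply ext' <;>
    simp [mul_def, p1_mk, p2_mk, p1_sub, p2_sub, mul_sub, sub_mul] <;> abel
lemma conj_mul_self (x : Octonion) : conj x * x = ‖x‖ ^ 2 • (1 : Octonion) := by
  rw [norm_sq]
  apply ext' <;>
  · show _ = (_ : ℝ) • _
    rw [mul_def]
    ext <;>
      simp [p1_mk, p2_mk, p1_one, p2_one, conj, Quaternion.re_mul, Quaternion.imI_mul,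
        Quaternion.imJ_mul, Quaternion.imK_mul, Quaternion.normSq_def'] <;> ring
lemma norm_mul (x y : Octonion) : ‖x * y‖ = ‖x‖ * ‖y‖ := by
  have h : ‖x * y‖ ^ 2 = (‖x‖ * ‖y‖) ^ 2 := by
    rw [mul_pow, norm_sq, norm_sq, norm_sq, mul_def, p1_mk, p2_mk]
    simp only [Quaternion.normSq_def', Quaternion.re_mul, Quaternion.imI_mul,
      Quaternion.imJ_mul, Quaternion.imK_mul, Quaternion.re_sub, Quaternion.imI_sub,
      Quaternion.imJ_sub, Quaternion.imK_sub, Quaternion.re_add, Quaternion.imI_add,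
      Quaternion.imJ_add, Quaternion.imK_add, Quaternion.re_star, Quaternion.imI_star,
      Quaternion.imJ_star, Quaternion.imK_star]
    ring
  nlinarith [norm_nonneg (x * y), norm_nonneg x, norm_nonneg y,
    mul_nonneg (norm_nonneg x) (norm_nonneg y)]

end Octonion

/-- The translated octonionic Cauchy kernel `E(x,a) = (x̄ - ā)/|x - a|⁸`. -/
def cauchyKernel (x a : Octonion) : Octonion :=
  (‖x - a‖ ^ 8)⁻¹ • (Octonion.conj x - Octonion.conj a)

/-- The Szegő kernel is the Kelvin inversion of the Cauchy kernel:
`S(x,a) = (x̄/|x|⁸) E(x̄/|x|², ā)`. -/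
theorem szego_eq_kelvin_of_cauchy (x a : Octonion) (hx : x ≠ 0)
    (h : (‖x‖ ^ 2)⁻¹ • Octonion.conj x ≠ Octonion.conj a) :
    (‖(1 : Octonion) - Octonion.conj x * a‖ ^ 8)⁻¹ •
        ((1 : Octonion) - Octonion.conj x * a) =
      (‖x‖ ^ 8)⁻¹ •
        (Octonion.conj x *
          cauchyKernel ((‖x‖ ^ 2)⁻¹ • Octonion.conj x) (Octonion.conj a)) := by
  have hn : ‖x‖ ≠ 0 := norm_ne_zero_iff.mpr hx
  set y : Octonion := (‖x‖ ^ 2)⁻¹ • Octonion.conj x with hy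
  have hcy : Octonion.conj y = (‖x‖ ^ 2)⁻¹ • x := by
    rw [hy, Octonion.conj_smul, Octonion.conj_conj]
  have key : Octonion.conj x * ((‖x‖ ^ 2)⁻¹ • x - a) = 1 - Octonion.conj x * a := by
    rw [Octonion.mul_sub', Octonion.mul_smul', Octonion.conj_mul_self, smul_smul,
      inv_mul_cancel₀ (by positivity), one_smul]
  have h1 : ‖y - Octonion.conj a‖ = ‖(‖x‖ ^ 2)⁻¹ • x - a‖ := by
    rw [← Octonion.norm_conj (y - Octonion.conj a), Octonion.conj_sub, hcy,
      Octonion.conj_conj]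
  have hnormd : ‖(1 : Octonion) - Octonion.conj x * a‖ = ‖x‖ * ‖y - Octonion.conj a‖ := by
    rw [← key, Octonion.norm_mul, Octonion.norm_conj, h1]
  rw [cauchyKernel, Octonion.mul_smul', smul_smul, hcy, Octonion.conj_conj, key,
    hnormd, mul_pow, mul_inv]
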